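/- Let (b_i, c_i)_{i=1}^D be a quadrature formula on [0,1] of order q, let P be a real polynomial in d variables of total degree at most q, and set I(x) = P(x). Let S, T_1, …, T_m : ℝ^d → ℝ^{d×d} take values in skew-symmetric matrices, let h, w_1, …, w_m ∈ ℝ, and suppose x, y ∈ ℝ^d satisfy y = x + (h S((x+y)/2) + Σ_{r=1}^m w_r T_r((x+y)/2)) · Σ_{i=1}^D b_i ∇I(x + c_i(y − x)). Then I(y) = I(x). That is, the conservative scheme implemented with a quadrature formula of order q exactly preserves every polynomial conserved quantity of degree ν ≤ q. -/

import Mathlib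

open Matrix RealInnerProductSpace

lemma mv_eval_differentiable {d : ℕ} (P : MvPolynomial (Fin d) ℝ) :
    Differentiable ℝ (fun v : Fin d → ℝ => MvPolynomial.eval v P) := by
  induction P using MvPolynomial.induction_on with
  | C a => simpa using differentiable_const a
  | add p q hp hq => simpa [Pi.add_def] using hp.add hq
  | mul_X p i hp =>
      simpa [MvPolynomial.eval_mul, Pi.mul_def] using
        hp.mul ((ContinuousLinearMap.proj i : (Fin d → ℝ) →L[ℝ] ℝ).differentiable)

lemma natDegree_aeval_le {d : ℕ} (P : MvPolynomial (Fin d) ℝ)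
    (f : Fin d → Polynomial ℝ) (hf : ∀ i, (f i).natDegree ≤ 1) :
    (MvPolynomial.aeval f P).natDegree ≤ P.totalDegree := by
  rw [MvPolynomial.aeval_def, MvPolynomial.eval₂_eq]
  apply Polynomial.natDegree_sum_le_of_forall_le
  intro u hu
  calc ((algebraMap ℝ (Polynomial ℝ)) (P.coeff u) * ∏ i ∈ u.support, f i ^ u i).natDegree
      ≤ ((algebraMap ℝ (Polynomial ℝ)) (P.coeff u)).natDegree
        + (∏ i ∈ u.support, f i ^ u i).natDegree := Polynomial.natDegree_mul_le
    _ ≤ 0 + ∑ i ∈ u.support, (f i ^ u i).natDegree := by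
        gcongr
        · exact le_of_eq (Polynomial.natDegree_C _)
        · exact Polynomial.natDegree_prod_le _ _
    _ ≤ ∑ i ∈ u.support, u i := by
        rw [zero_add]
        apply Finset.sum_le_sum
        intro i _
        calc (f i ^ u i).natDegree ≤ u i * (f i).natDegree :=
              Polynomial.natDegree_pow_le
          _ ≤ u i * 1 := by gcongr; exact hf i
          _ = u i := mul_one _
    _ ≤ P.totalDegree := MvPolynomial.le_totalDegree hu

set_option maxHeartbeats 800000 in
/-- The conservative scheme implemented with a quadrature formula
`(b_i, c_i)_{i=1}^D` of order `q` exactly preserves every polynomial conserved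
quantity `I` of total degree at most `q`: if
`y = x + (h S((x+y)/2) + Σ_r w_r T_r((x+y)/2)) Σ_i b_i ∇I(x + c_i(y − x))`
with skew-symmetric `S(z)`, `T_r(z)`, then `I(y) = I(x)`. -/
theorem quadrature_scheme_preserves_polynomial_invariant
    (d m D q : ℕ) (b c : Fin D → ℝ)
    (hc : ∀ i, c i ∈ Set.Icc (0:ℝ) 1)
    (horder : ∀ p : Polynomial ℝ, p.degree < (q : WithBot ℕ) →
      ∑ i, b i * p.eval (c i) = ∫ τ in (0:ℝ)..1, p.eval τ)
    (P : MvPolynomial (Fin d) ℝ) (hP : P.totalDegree ≤ q)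
    (I : EuclideanSpace ℝ (Fin d) → ℝ)
    (hI : ∀ z, I z = MvPolynomial.eval (fun i => z i) P)
    (S : EuclideanSpace ℝ (Fin d) → Matrix (Fin d) (Fin d) ℝ)
    (T : Fin m → EuclideanSpace ℝ (Fin d) → Matrix (Fin d) (Fin d) ℝ)
    (hS : ∀ z, (S z)ᵀ = -(S z)) (hT : ∀ r z, (T r z)ᵀ = -(T r z))
    (h : ℝ) (w : Fin m → ℝ) (x y : EuclideanSpace ℝ (Fin d))
    (hstep : y = x + Matrix.toEuclideanLin
        (h • S ((2:ℝ)⁻¹ • (x + y)) + ∑ r, w r • T r ((2:ℝ)⁻¹ • (x + y)))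
        (∑ i, b i • gradient I (x + c i • (y - x)))) :
    I y = I x := by
  classical
  set v : EuclideanSpace ℝ (Fin d) := ∑ i, b i • gradient I (x + c i • (y - x)) with hv
  set A : Matrix (Fin d) (Fin d) ℝ :=
    h • S ((2:ℝ)⁻¹ • (x + y)) + ∑ r, w r • T r ((2:ℝ)⁻¹ • (x + y)) with hA
  have hAskew : Aᵀ = -A := by
    simp only [hA, Matrix.transpose_add, Matrix.transpose_smul, Matrix.transpose_sum,
      hS, hT, smul_neg, neg_add]
    rw [Finset.sum_neg_distrib]
  -- differentiability of I
  have hdiffI : Differentiable ℝ I := by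
    have h2 : I = (fun v : Fin d → ℝ => MvPolynomial.eval v P) ∘
        ⇑(PiLp.continuousLinearEquiv 2 ℝ (fun _ : Fin d => ℝ)) := by
      funext z; exact hI z
    rw [h2]
    exact (mv_eval_differentiable P).comp
      (PiLp.continuousLinearEquiv 2 ℝ (fun _ : Fin d => ℝ)).differentiable
  -- the univariate polynomial along the segment
  set p : Polynomial ℝ :=
    MvPolynomial.aeval (fun i => Polynomial.C (x i) + Polynomial.C (y i - x i) * Polynomial.X) P
    with hp
  have hpeval : ∀ τ : ℝ, p.eval τ = I (x + τ • (y - x)) := by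
    intro τ
    rw [hI, hp, MvPolynomial.aeval_def, ← Polynomial.coe_evalRingHom,
      MvPolynomial.eval₂_comp_left (Polynomial.evalRingHom τ)]
    rw [show MvPolynomial.eval (fun i => (x + τ • (y - x)) i)
        = MvPolynomial.eval₂ (RingHom.id ℝ) (fun i => (x + τ • (y - x)) i) from rfl]
    congr 1
    · ext a; simp
    · funext i
      simp [PiLp.add_apply, PiLp.smul_apply, PiLp.sub_apply, smul_eq_mul]
      ring
  have hnd : p.natDegree ≤ q := by
    refine le_trans (natDegree_aeval_le P _ ?_) hP
    intro i
    calc (Polynomial.C (x i) + Polynomial.C (y i - x i) * Polynomial.X).natDegree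
        ≤ max (Polynomial.C (x i)).natDegree
          (Polynomial.C (y i - x i) * Polynomial.X).natDegree :=
          Polynomial.natDegree_add_le _ _
      _ ≤ 1 := by
          apply max_le
          · simp
          · exact le_trans Polynomial.natDegree_mul_le (by simp)
  have hdeg : p.derivative.degree < (q : WithBot ℕ) := by
    by_cases hp0 : p = 0
    · simp [hp0]
    · calc p.derivative.degree < p.degree := Polynomial.degree_derivative_lt hp0
        _ ≤ (p.natDegree : WithBot ℕ) := Polynomial.degree_le_natDegree
        _ ≤ (q : WithBot ℕ) := by exact_mod_cast hnd
  -- derivative along the segment equals inner product with gradient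
  have key : ∀ τ : ℝ, p.derivative.eval τ
      = ⟪gradient I (x + τ • (y - x)), y - x⟫ := by
    intro τ
    have h1 : HasDerivAt (fun s : ℝ => I (x + s • (y - x))) (p.derivative.eval τ) τ := by
      have := Polynomial.hasDerivAt p τ
      have heq : (fun s : ℝ => p.eval s) = fun s : ℝ => I (x + s • (y - x)) :=
        funext hpeval
      rwa [heq] at this
    have hcurve : HasDerivAt (fun s : ℝ => x + s • (y - x)) (y - x) τ := by
      simpa using ((hasDerivAt_id τ).smul_const (y - x)).const_add x
    have h2 : HasDerivAt (fun s : ℝ => I (x + s • (y - x)))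
        (⟪gradient I (x + τ • (y - x)), y - x⟫) τ := by
      have hg := (hdiffI (x + τ • (y - x))).hasGradientAt.hasFDerivAt
      have := hg.comp_hasDerivAt τ hcurve
      simpa [InnerProductSpace.toDual_apply_apply, Function.comp_def] using this
    exact h1.unique h2
  -- fundamental theorem of calculus
  have ftc : ∫ τ in (0:ℝ)..1, p.derivative.eval τ = I y - I x := by
    have e1 := intervalIntegral.integral_deriv_eq_sub' (a := (0:ℝ)) (b := (1:ℝ))
      (fun s : ℝ => p.eval s) (f' := fun s : ℝ => p.derivative.eval s)
      (funext fun s => (Polynomial.hasDerivAt p s).deriv)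
      (fun s _ => (Polynomial.hasDerivAt p s).differentiableAt)
      ((Polynomial.continuous _).continuousOn)
    rw [e1]
    simp only [hpeval]
    congr 1 <;> simp
  have hquad := horder p.derivative hdeg
  -- the quadrature sum equals ⟪v, y - x⟫
  have hsum : ∑ i, b i * p.derivative.eval (c i) = ⟪v, y - x⟫ := by
    rw [hv, sum_inner]
    refine Finset.sum_congr rfl fun i _ => ?_
    rw [key (c i), real_inner_smul_left]
  -- skew-symmetry kills the quadratic form
  have hyx : y - x = Matrix.toEuclideanLin A v := by
    rw [hstep]; abel
  have hzero : ⟪v, y - x⟫ = 0 := by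
    rw [hyx]
    have hdot : ⟪v, Matrix.toEuclideanLin A v⟫
        = (fun i => v i) ⬝ᵥ (A *ᵥ fun i => v i) := by
      simp [PiLp.inner_apply, Matrix.toEuclideanLin_apply, dotProduct,
        RCLike.inner_apply, mul_comm]
    rw [hdot]
    set u : Fin d → ℝ := fun i => v i
    have h1 : u ⬝ᵥ A *ᵥ u = -(u ⬝ᵥ A *ᵥ u) := by
      conv_lhs => rw [Matrix.dotProduct_mulVec, ← Matrix.mulVec_transpose, hAskew]
      rw [Matrix.neg_mulVec, neg_dotProduct, dotProduct_comm]
    linarith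
  have : I y - I x = 0 := by
    rw [← ftc, ← hquad, hsum, hzero]
  linarith
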